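/- For 0 < R and −π < a < b < π let S(R,a,b) = {z ∈ ℂ : z ≠ 0, |z| < R, a < arg z < b}. Let h be holomorphic on S(R,a,b) and suppose that z ↦ |h(z)|/|z| is integrable on S(R,a,b) with respect to Lebesgue area measure. Then for all a < a' < b' < b and 0 < R' < R, the function z ↦ |h'(z)| is integrable on S(R',a',b') with respect to area measure; equivalently z ↦ |z·h'(z)|/|z| is integrable there, i.e. the operator z·d/dz preserves the class of holomorphic functions on a sector that are locally ℓ¹ for dr dθ. -/

import Mathlib

open MeasureTheory

/-- The open sector `{z ≠ 0 : |z| < R, a < arg z < b}`. -/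
def openSector (R a b : ℝ) : Set ℂ :=
  {z : ℂ | z ≠ 0 ∧ ‖z‖ < R ∧ a < Complex.arg z ∧ Complex.arg z < b}

open Metric Set Complex
open scoped ENNReal NNReal

section Auxiliary

lemma isOpen_openSector {R a b : ℝ} (ha : -Real.pi < a) (hb : b < Real.pi) :
    IsOpen (openSector R a b) := by
  rw [isOpen_iff_mem_nhds]
  rintro z ⟨hz0, hzR, hza, hzb⟩
  have hslit : z ∈ Complex.slitPlane := by
    rw [Complex.mem_slitPlane_iff_arg]
    exact ⟨by linarith, hz0⟩
  have hc : ContinuousAt Complex.arg z := Complex.continuousAt_arg hslit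
  have h1 : ∀ᶠ w in nhds z, ‖w‖ < R :=
    continuous_norm.continuousAt.eventually_lt continuousAt_const hzR
  have h2 : ∀ᶠ w in nhds z, a < Complex.arg w :=
    continuousAt_const.eventually_lt hc hza
  have h3 : ∀ᶠ w in nhds z, Complex.arg w < b :=
    hc.eventually_lt continuousAt_const hzb
  have h4 : ∀ᶠ w in nhds z, w ≠ 0 :=
    (isOpen_compl_singleton.eventually_mem hz0 : _)
  filter_upwards [h1, h2, h3, h4] with w e1 e2 e3 e4
  exact ⟨e4, e1, e2, e3⟩

lemma sector_ball_subset {R a b R' a' b' : ℝ} (hR' : 0 < R') (hRR : R' < R)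
    (ha : -Real.pi < a) (haa : a < a') (hbb : b' < b) (hb : b < Real.pi)
    {c : ℝ} (hc0 : 0 < c) (hc2 : c ≤ 1/2)
    (hcR : c ≤ (R - R') / (2 * R'))
    (hce : Real.pi * c < min (a' - a) (b - b'))
    {z : ℂ} (hz : z ∈ openSector R' a' b') :
    closedBall z (c * ‖z‖) ⊆ openSector R a b := by
  obtain ⟨hz0, hzR, hza, hzb⟩ := hz
  have hzpos : 0 < ‖z‖ := norm_pos_iff.mpr hz0
  intro w hw
  rw [mem_closedBall, dist_eq] at hw
  have hup : ‖w‖ ≤ ‖z‖ + ‖w - z‖ := by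
    simpa using norm_add_le z (w - z)
  have hlow : ‖z‖ ≤ ‖w‖ + ‖w - z‖ := by
    have := norm_add_le w (z - w)
    simpa [norm_sub_rev z w] using this
  have hwpos : 0 < ‖w‖ := by nlinarith
  have hw0 : w ≠ 0 := by
    intro h; rw [h] at hwpos; simp at hwpos
  have hwR : ‖w‖ < R := by
    have : c * ‖z‖ ≤ (R - R') / (2 * R') * R' := by
      apply mul_le_mul hcR hzR.le hzpos.le
      exact div_nonneg (by linarith) (by linarith)
    have hRR' : (R - R') / (2 * R') * R' = (R - R') / 2 := by
      field_simp
    nlinarith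
  -- the argument estimate
  set v : ℂ := (w - z) / z with hv
  have hvabs : ‖v‖ ≤ c := by
    rw [hv, norm_div]
    rw [div_le_iff₀ hzpos]
    exact hw
  have huv : w / z = 1 + v := by
    rw [hv, one_add_div hz0, add_sub_cancel]
  have hure : (1/2 : ℝ) ≤ (w / z).re := by
    rw [huv]
    have : -‖v‖ ≤ v.re := neg_le_of_abs_le (Complex.abs_re_le_norm v) |>.trans_eq rfl
    simp only [Complex.add_re, Complex.one_re]
    nlinarith
  have huabs : (1/2 : ℝ) ≤ ‖w / z‖ := le_trans hure (Complex.re_le_norm _)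
  set δ := Complex.arg (w / z) with hδ
  have hδhalf : |δ| ≤ Real.pi / 2 := Complex.abs_arg_le_pi_div_two_iff.mpr (by linarith)
  have hsin : |Real.sin δ| ≤ 2 * c := by
    rw [hδ, Complex.sin_arg]
    rw [abs_div, _root_.abs_of_nonneg (norm_nonneg _)]
    have him : |(w / z).im| ≤ c := by
      rw [huv]
      simp only [Complex.add_im, Complex.one_im, zero_add]
      exact le_trans (Complex.abs_im_le_norm v) hvabs
    rw [div_le_iff₀ (by linarith : (0:ℝ) < ‖w / z‖)]
    calc |(w/z).im| ≤ c := him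
      _ ≤ 2 * c * (1/2) := by ring_nf; linarith
      _ ≤ 2 * c * ‖w / z‖ := by
          apply mul_le_mul_of_nonneg_left huabs; positivity
  have hδbound : |δ| ≤ Real.pi * c := by
    have h1 : 2 / Real.pi * |δ| ≤ |Real.sin δ| := Real.mul_abs_le_abs_sin hδhalf
    have hπ := Real.pi_pos
    have h2 : 2 / Real.pi * |δ| ≤ 2 * c := h1.trans hsin
    rw [div_mul_eq_mul_div, div_le_iff₀ hπ] at h2
    linarith
  have hδa : a' - a > δ ∧ δ > -(b - b') → True := fun _ => trivial
  have hmin1 : Real.pi * c < a' - a := lt_of_lt_of_le hce (min_le_left _ _)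
  have hmin2 : Real.pi * c < b - b' := lt_of_lt_of_le hce (min_le_right _ _)
  have habs := abs_le.mp hδbound
  have hargw : Complex.arg w = Complex.arg z + δ := by
    have hwz : z * (w / z) = w := mul_div_cancel₀ w hz0
    have := Complex.arg_mul_eq_add_arg_iff (x := z) (y := w / z) hz0 (by
      intro h; rw [h, mul_zero] at hwz; exact hw0 hwz.symm)
    rw [hwz] at this
    rw [this.mpr]
    constructor
    · linarith
    · linarith
  refine ⟨hw0, hwR, ?_, ?_⟩
  · rw [hargw]; linarith
  · rw [hargw]; linarith

-- step i: circle Cauchy estimate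
lemma cauchy_circle_bound {S : Set ℂ} {h : ℂ → ℂ} (hd : DifferentiableOn ℂ h S)
    {z : ℂ} {r : ℝ} (hsub : closedBall z r ⊆ S) {s : ℝ} (hs : 0 < s) (hsr : s ≤ r) :
    ‖deriv h z‖ * s ≤
      (2 * Real.pi)⁻¹ * ∫ θ in (0:ℝ)..(2 * Real.pi), ‖h (circleMap z s θ)‖ := by
  have hsub' : closedBall z s ⊆ S := (closedBall_subset_closedBall hsr).trans hsub
  have hdc : DiffContOnCl ℂ h (ball z s) := hd.diffContOnCl_ball hsub'
  have hderiv : deriv h z = (2 * (Real.pi:ℂ) * Complex.I)⁻¹ •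
      ∮ w in C(z, s), (w - z) ^ (-2 : ℤ) • h w := by
    have e := hdc.deriv_eq_smul_circleIntegral hs
    have e2 : (∮ w in C(z, s), (w - z) ^ (-2 : ℤ) • h w) =
        ∮ w in C(z, s), (1 / (w - z) ^ 2) • h w := by
      simp only [zpow_neg, zpow_ofNat, one_div]
    rw [e2, e, smul_smul, inv_mul_cancel₀ (by simp [Real.pi_ne_zero, Complex.I_ne_zero]),
      one_smul]
  have hnorm1 : ‖(2 * (Real.pi:ℂ) * Complex.I)⁻¹‖ = (2 * Real.pi)⁻¹ := by
    rw [norm_inv]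
    simp [norm_mul, Complex.norm_I, Complex.norm_real,
      _root_.abs_of_pos Real.pi_pos]
  have hbound : ‖∮ w in C(z, s), (w - z) ^ (-2 : ℤ) • h w‖ ≤
      s⁻¹ * ∫ θ in (0:ℝ)..(2 * Real.pi), ‖h (circleMap z s θ)‖ := by
    rw [circleIntegral]
    refine le_trans (intervalIntegral.norm_integral_le_integral_norm (by positivity)) ?_
    rw [← intervalIntegral.integral_const_mul]
    apply le_of_eq
    apply intervalIntegral.integral_congr
    intro θ _
    simp only []
    rw [norm_smul, norm_smul, deriv_circleMap]
    rw [norm_mul, norm_circleMap_zero, Complex.norm_I, mul_one]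
    rw [norm_zpow, circleMap_sub_center, norm_circleMap_zero]
    rw [_root_.abs_of_pos hs]
    rw [zpow_neg, zpow_two]
    field_simp
  have h1 : ‖deriv h z‖ ≤
      (2 * Real.pi)⁻¹ * (s⁻¹ * ∫ θ in (0:ℝ)..(2 * Real.pi), ‖h (circleMap z s θ)‖) := by
    rw [hderiv, norm_smul, hnorm1]
    apply mul_le_mul_of_nonneg_left hbound
    positivity
  calc ‖deriv h z‖ * s
      ≤ ((2 * Real.pi)⁻¹ * (s⁻¹ * ∫ θ in (0:ℝ)..(2 * Real.pi),
          ‖h (circleMap z s θ)‖)) * s :=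
        mul_le_mul_of_nonneg_right h1 hs.le
    _ = (2 * Real.pi)⁻¹ * ∫ θ in (0:ℝ)..(2 * Real.pi), ‖h (circleMap z s θ)‖ := by
        field_simp

lemma polar_symm_circleMap (z : ℂ) (s θ : ℝ) :
    z + Complex.polarCoord.symm (s, θ) = circleMap z s θ := by
  simp [circleMap, Complex.polarCoord_symm_apply, Complex.exp_mul_I]

lemma ball_integral_polar {S : Set ℂ} {h : ℂ → ℂ} (hd : DifferentiableOn ℂ h S)
    {z : ℂ} {r : ℝ} (hr : 0 < r) (hsub : closedBall z r ⊆ S) :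
    (∫ p in Ioo (0:ℝ) r ×ˢ Ioo (-Real.pi) Real.pi,
        p.1 * ‖h (circleMap z p.1 p.2)‖) = ∫ w in ball z r, ‖h w‖ := by
  set f : ℂ → ℝ := (ball (0:ℂ) r).indicator (fun w => ‖h (z + w)‖) with hf
  have hπ := Real.pi_pos
  have step1 : ∫ w in ball z r, ‖h w‖ = ∫ w, f w := by
    rw [← integral_indicator measurableSet_ball]
    rw [← integral_add_left_eq_self _ z]
    congr 1
    funext w
    rw [hf]
    by_cases hw : w ∈ ball (0:ℂ) r
    · rw [indicator_of_mem hw, indicator_of_mem]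
      rw [mem_ball, dist_eq] at hw ⊢
      simpa using hw
    · rw [indicator_of_notMem hw, indicator_of_notMem]
      rw [mem_ball, dist_eq] at hw ⊢
      simpa using hw
  have step2 := Complex.integral_comp_polarCoord_symm f
  rw [polarCoord_target] at step2
  have step3 : (∫ p in Ioi (0:ℝ) ×ˢ Ioo (-Real.pi) Real.pi,
      p.1 • f (Complex.polarCoord.symm p)) =
      ∫ p in Ioo (0:ℝ) r ×ˢ Ioo (-Real.pi) Real.pi,
        p.1 * ‖h (circleMap z p.1 p.2)‖ := by
    rw [setIntegral_eq_of_subset_of_forall_diff_eq_zero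
      (measurableSet_Ioi.prod measurableSet_Ioo)
      (prod_mono_left Ioo_subset_Ioi_self)
      (f := fun p : ℝ × ℝ => p.1 • f (Complex.polarCoord.symm p)) ?_]
    · apply setIntegral_congr_fun (measurableSet_Ioo.prod measurableSet_Ioo)
      rintro ⟨s, θ⟩ ⟨hs, hθ⟩
      have hmem : Complex.polarCoord.symm (s, θ) ∈ ball (0:ℂ) r := by
        rw [mem_ball, dist_zero_right, Complex.norm_polarCoord_symm]
        simp only
        rw [_root_.abs_of_pos hs.1]
        exact hs.2
      simp only [smul_eq_mul]
      rw [hf, indicator_of_mem hmem]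
      rw [← polar_symm_circleMap]
    · rintro ⟨s, θ⟩ ⟨⟨hs, hθ⟩, hns⟩
      have hsr : r ≤ s := by
        by_contra hc
        exact hns ⟨⟨hs, not_le.mp hc⟩, hθ⟩
      have : Complex.polarCoord.symm (s, θ) ∉ ball (0:ℂ) r := by
        rw [mem_ball, dist_zero_right, Complex.norm_polarCoord_symm]
        simp only
        rw [_root_.abs_of_pos hs]
        exact not_lt.mpr hsr
      simp only [smul_eq_mul]
      rw [hf, indicator_of_notMem this, mul_zero]
  rw [step1, ← step2, step3]

lemma cauchy_pointwise {S : Set ℂ} {h : ℂ → ℂ} (hd : DifferentiableOn ℂ h S)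
    {z : ℂ} {r : ℝ} (hr : 0 < r) (hsub : closedBall z r ⊆ S) :
    ‖deriv h z‖ * (r ^ 3 / 3) ≤
      (2 * Real.pi)⁻¹ * ∫ w in ball z r, ‖h w‖ := by
  have hπ := Real.pi_pos
  set F : ℝ × ℝ → ℝ := fun p => p.1 * ‖h (circleMap z p.1 p.2)‖ with hF
  -- continuity of the polar integrand
  have hg : Continuous (fun p : ℝ × ℝ => circleMap z p.1 p.2) := by
    simp only [circleMap]
    fun_prop
  have hmaps : MapsTo (fun p : ℝ × ℝ => circleMap z p.1 p.2)
      (Icc (0:ℝ) r ×ˢ Icc (-Real.pi) Real.pi) (closedBall z r) := by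
    rintro ⟨s, θ⟩ ⟨hs, _⟩
    rw [mem_closedBall, dist_eq, circleMap_sub_center, norm_circleMap_zero]
    rw [_root_.abs_of_nonneg hs.1]
    exact hs.2
  have hcont : ContinuousOn F (Icc (0:ℝ) r ×ˢ Icc (-Real.pi) Real.pi) := by
    apply (continuous_fst.continuousOn).mul
    exact continuous_norm.comp_continuousOn
      (((hd.continuousOn.mono hsub).comp hg.continuousOn) hmaps)
  have hFint : IntegrableOn F (Ioo (0:ℝ) r ×ˢ Ioo (-Real.pi) Real.pi) volume :=
    (hcont.integrableOn_compact (isCompact_Icc.prod isCompact_Icc)).mono_set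
      (prod_mono Ioo_subset_Icc_self Ioo_subset_Icc_self)
  set J : ℝ → ℝ := fun s => ∫ θ in Ioo (-Real.pi) Real.pi, ‖h (circleMap z s θ)‖
    with hJ
  -- Fubini
  have hprod : (volume : Measure (ℝ × ℝ)) = (volume : Measure ℝ).prod volume :=
    Measure.volume_eq_prod ℝ ℝ
  have hFint' : IntegrableOn F (Ioo (0:ℝ) r ×ˢ Ioo (-Real.pi) Real.pi)
      ((volume : Measure ℝ).prod volume) := by rwa [← hprod]
  have fubini : (∫ p in Ioo (0:ℝ) r ×ˢ Ioo (-Real.pi) Real.pi, F p) =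
      ∫ s in Ioo (0:ℝ) r, s * J s := by
    rw [hprod, setIntegral_prod F hFint']
    apply setIntegral_congr_fun measurableSet_Ioo
    intro s _
    simp only [hF, hJ]
    rw [integral_const_mul]
  -- the key pointwise circle bound, with both endpoints Ioo(-π,π)
  have key2 : ∀ s ∈ Ioo (0:ℝ) r, ‖deriv h z‖ * s ^ 2 ≤
      (2 * Real.pi)⁻¹ * (s * J s) := by
    intro s hs
    have hIJ : (∫ θ in (0:ℝ)..(2 * Real.pi), ‖h (circleMap z s θ)‖) = J s := by
      have hper : Function.Periodic (fun θ : ℝ => ‖h (circleMap z s θ)‖)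
          (2 * Real.pi) := (periodic_circleMap z s).comp fun w => ‖h w‖
      have := hper.intervalIntegral_add_eq 0 (-Real.pi)
      simp only [zero_add] at this
      rw [this]
      have hend : -Real.pi + 2 * Real.pi = Real.pi := by ring
      rw [hend, intervalIntegral.integral_of_le (by linarith), hJ]
      exact integral_Ioc_eq_integral_Ioo
    have hkey := cauchy_circle_bound hd hsub hs.1 hs.2.le
    rw [hIJ] at hkey
    calc ‖deriv h z‖ * s ^ 2 = (‖deriv h z‖ * s) * s := by ring
      _ ≤ ((2 * Real.pi)⁻¹ * J s) * s := mul_le_mul_of_nonneg_right hkey hs.1.le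
      _ = (2 * Real.pi)⁻¹ * (s * J s) := by ring
  -- integrability of both sides
  have hL : IntegrableOn (fun s : ℝ => ‖deriv h z‖ * s ^ 2) (Ioo (0:ℝ) r) volume :=
    (Continuous.integrableOn_Icc (by fun_prop)).mono_set Ioo_subset_Icc_self
  have hR : IntegrableOn (fun s : ℝ => (2 * Real.pi)⁻¹ * (s * J s)) (Ioo (0:ℝ) r) volume := by
    have h1 : IntegrableOn (fun s : ℝ => s * J s) (Ioo (0:ℝ) r) volume := by
      have h2 := hFint'
      rw [IntegrableOn, ← Measure.prod_restrict] at h2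
      have h3 := h2.integral_prod_left
      apply h3.congr
      filter_upwards with s
      simp only [hF, hJ]
      rw [integral_const_mul]
    exact h1.const_mul _
  have hmono := setIntegral_mono_on hL hR measurableSet_Ioo key2
  -- compute LHS integral
  have hLval : (∫ s in Ioo (0:ℝ) r, ‖deriv h z‖ * s ^ 2) =
      ‖deriv h z‖ * (r ^ 3 / 3) := by
    rw [integral_const_mul]
    congr 1
    rw [← integral_Ioc_eq_integral_Ioo, ← intervalIntegral.integral_of_le hr.le]
    rw [integral_pow]
    norm_num
  rw [hLval] at hmono
  calc ‖deriv h z‖ * (r ^ 3 / 3)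
      ≤ ∫ s in Ioo (0:ℝ) r, (2 * Real.pi)⁻¹ * (s * J s) := hmono
    _ = (2 * Real.pi)⁻¹ * ∫ s in Ioo (0:ℝ) r, s * J s := by rw [← integral_const_mul]
    _ = (2 * Real.pi)⁻¹ * ∫ w in ball z r, ‖h w‖ := by
        rw [← fubini, ball_integral_polar hd hr hsub]

-- measurability of the indicator extension
lemma measurable_indicator_g {S : Set ℂ} (hS : IsOpen S) {h : ℂ → ℂ}
    (hc : ContinuousOn h S) :
    Measurable (S.indicator fun w => (‖h w‖₊ : ℝ≥0∞)) := by
  have hgc : ContinuousOn (fun w => (‖h w‖₊ : ℝ≥0∞)) S :=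
    (ENNReal.continuous_coe.comp continuous_nnnorm).comp_continuousOn hc
  apply measurable_of_isOpen
  intro O hO
  have hpre : (S.indicator fun w => (‖h w‖₊ : ℝ≥0∞)) ⁻¹' O =
      (S ∩ (fun w => (‖h w‖₊ : ℝ≥0∞)) ⁻¹' O) ∪ (Sᶜ ∩ (fun _ : ℂ => (0:ℝ≥0∞)) ⁻¹' O) := by
    ext x
    by_cases hx : x ∈ S <;> simp [Set.indicator_apply, hx]
  rw [hpre]
  exact ((hgc.isOpen_inter_preimage hS hO).measurableSet).union
    (hS.measurableSet.compl.inter (measurable_const hO.measurableSet))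

end Auxiliary

/-- Claim Dc:claim8: the operator `z·d/dz` preserves the class of holomorphic
functions on a sector that are locally `ℓ¹` for `dr dθ`: if `|h(z)|/|z|` is
area-integrable on a sector, then `|h'(z)|` is area-integrable on any strictly
smaller sector. -/
theorem z_ddz_preserves_l1
    (R a b : ℝ) (hR : 0 < R) (ha : -Real.pi < a) (hab : a < b)
    (hb : b < Real.pi) (h : ℂ → ℂ)
    (hd : DifferentiableOn ℂ h (openSector R a b))
    (hint : IntegrableOn (fun z : ℂ => ‖h z‖ / ‖z‖)
      (openSector R a b) volume) :
    ∀ a' b' R' : ℝ, a < a' → a' < b' → b' < b → 0 < R' → R' < R →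
      IntegrableOn (fun z : ℂ => ‖deriv h z‖)
        (openSector R' a' b') volume := by
  intro a' b' R' haa' hab' hbb' hR'0 hR'R
  set S := openSector R a b with hSdef
  set S' := openSector R' a' b' with hS'def
  have hπ := Real.pi_pos
  have hSopen : IsOpen S := isOpen_openSector ha hb
  have hS'open : IsOpen S' := isOpen_openSector (by linarith) (by linarith)
  have hS'S : S' ⊆ S := by
    rintro z ⟨h0, hr, h1, h2⟩
    exact ⟨h0, hr.trans hR'R, haa'.trans h1, h2.trans hbb'⟩
  -- constants
  set ε : ℝ := min (a' - a) (b - b') with hε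
  have hε0 : 0 < ε := lt_min (by linarith) (by linarith)
  set c : ℝ := min (1/2) (min ((R - R') / (2 * R')) (ε / (2 * Real.pi))) with hc
  have hc0 : 0 < c := by
    apply lt_min (by norm_num)
    exact lt_min (div_pos (by linarith) (by linarith)) (by positivity)
  have hc2 : c ≤ 1/2 := min_le_left _ _
  have hc1 : c < 1 := by linarith
  have hcR : c ≤ (R - R') / (2 * R') := (min_le_right _ _).trans (min_le_left _ _)
  have hce : Real.pi * c < ε := by
    have h1 : c ≤ ε / (2 * Real.pi) := (min_le_right _ _).trans (min_le_right _ _)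
    have h2 : Real.pi * c ≤ Real.pi * (ε / (2 * Real.pi)) := mul_le_mul_of_nonneg_left h1 hπ.le
    have h3 : Real.pi * (ε / (2 * Real.pi)) = ε / 2 := by field_simp
    linarith
  have hball : ∀ z ∈ S', closedBall z (c * ‖z‖) ⊆ S := fun z hz =>
    sector_ball_subset hR'0 hR'R ha haa' hbb' hb hc0 hc2 hcR hce hz
  -- extended function and kernel
  set g : ℂ → ℝ≥0∞ := S.indicator (fun w => (‖h w‖₊ : ℝ≥0∞)) with hg
  have hgmeas : Measurable g := measurable_indicator_g hSopen hd.continuousOn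
  set K : Set (ℂ × ℂ) := {p : ℂ × ℂ | dist p.2 p.1 < c * ‖p.1‖} with hK
  have hKopen : IsOpen K := by
    apply isOpen_lt
    · exact continuous_snd.dist continuous_fst
    · exact continuous_const.mul (continuous_norm.comp continuous_fst)
  set F : ℂ × ℂ → ℝ≥0∞ :=
    K.indicator (fun p => ((ENNReal.ofReal (‖p.1‖))⁻¹) ^ 3 * g p.2) with hF
  have hFmeas : Measurable F := by
    apply Measurable.indicator _ hKopen.measurableSet
    apply Measurable.mul
    · exact ((ENNReal.measurable_ofReal.comp
        (continuous_norm.measurable.comp measurable_fst)).inv).pow_const 3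
    · exact hgmeas.comp measurable_snd
  set C₁ : ℝ≥0∞ := ENNReal.ofReal (3 / (2 * Real.pi * c ^ 3)) with hC₁
  set C₂ : ℝ≥0∞ := ENNReal.ofReal (1 + c) ^ 3 * ENNReal.ofReal (c / (1 - c)) ^ 2 *
    (NNReal.pi : ℝ≥0∞) with hC₂
  have hC₂ne : C₂ ≠ ⊤ := by
    rw [hC₂]
    exact ENNReal.mul_ne_top (ENNReal.mul_ne_top
      (ENNReal.pow_ne_top ENNReal.ofReal_ne_top) (ENNReal.pow_ne_top ENNReal.ofReal_ne_top))
      ENNReal.coe_ne_top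
  -- pointwise bound via Cauchy estimates
  have P1 : ∀ z ∈ S', (‖deriv h z‖₊ : ℝ≥0∞) ≤ C₁ * ∫⁻ w, F (z, w) := by
    intro z hz
    have hz0 : z ≠ 0 := hz.1
    have hzpos : 0 < ‖z‖ := norm_pos_iff.mpr hz0
    set r : ℝ := c * ‖z‖ with hr
    have hr0 : 0 < r := by positivity
    have hsubz : closedBall z r ⊆ S := hball z hz
    have hcp := cauchy_pointwise hd hr0 hsubz
    have hhint : IntegrableOn (fun w => ‖h w‖) (ball z r) volume :=
      ((continuous_norm.comp_continuousOn
        (hd.continuousOn.mono hsubz)).integrableOn_compact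
        (isCompact_closedBall z r)).mono_set ball_subset_closedBall
    have hofReal : ENNReal.ofReal (∫ w in ball z r, ‖h w‖) =
        ∫⁻ w in ball z r, (‖h w‖₊ : ℝ≥0∞) := by
      rw [ofReal_integral_eq_lintegral_ofReal hhint
        (Filter.Eventually.of_forall fun w => norm_nonneg _)]
      exact lintegral_congr fun w => by
        rw [ofReal_norm, enorm_eq_nnnorm]
    have hreal : ‖deriv h z‖ ≤
        (3 / (2 * Real.pi * r ^ 3)) * ∫ w in ball z r, ‖h w‖ := by
      rw [div_mul_eq_mul_div, le_div_iff₀ (by positivity)]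
      calc ‖deriv h z‖ * (2 * Real.pi * r ^ 3)
          = (‖deriv h z‖ * (r ^ 3 / 3)) * (6 * Real.pi) := by ring
        _ ≤ ((2 * Real.pi)⁻¹ * ∫ w in ball z r, ‖h w‖) * (6 * Real.pi) :=
            mul_le_mul_of_nonneg_right hcp (by positivity)
        _ = 3 * ∫ w in ball z r, ‖h w‖ := by field_simp; ring
    have henn : (‖deriv h z‖₊ : ℝ≥0∞) ≤ ENNReal.ofReal (3 / (2 * Real.pi * r ^ 3)) *
        ∫⁻ w in ball z r, (‖h w‖₊ : ℝ≥0∞) := by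
      rw [← hofReal, ← ENNReal.ofReal_mul (by positivity), ← enorm_eq_nnnorm,
        ← ofReal_norm]
      exact ENNReal.ofReal_le_ofReal hreal
    have ha0 : ENNReal.ofReal (‖z‖) ≠ 0 := by
      simp only [ne_eq, ENNReal.ofReal_eq_zero, not_le]
      linarith
    have hane : ENNReal.ofReal (‖z‖) ≠ ⊤ := ENNReal.ofReal_ne_top
    have hker : (∫⁻ w in ball z r, (‖h w‖₊ : ℝ≥0∞)) ≤
        ENNReal.ofReal (‖z‖) ^ 3 * ∫⁻ w, F (z, w) := by
      rw [← lintegral_indicator measurableSet_ball,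
        ← lintegral_const_mul' _ _ (ENNReal.pow_ne_top hane)]
      apply lintegral_mono
      intro w
      simp only []
      by_cases hw : w ∈ ball z r
      · rw [indicator_of_mem hw]
        have hwK : (z, w) ∈ K := mem_ball.mp hw
        have hwS : w ∈ S := hsubz (ball_subset_closedBall hw)
        rw [hF]
        rw [indicator_of_mem hwK]
        simp only [hg]
        rw [indicator_of_mem hwS]
        have hcancel : ENNReal.ofReal (‖z‖) ^ 3 *
            (ENNReal.ofReal (‖z‖))⁻¹ ^ 3 = 1 := by
          rw [← mul_pow, ENNReal.mul_inv_cancel ha0 hane, one_pow]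
        rw [← mul_assoc, hcancel, one_mul]
      · rw [indicator_of_notMem hw]
        exact zero_le
    calc (‖deriv h z‖₊ : ℝ≥0∞)
        ≤ ENNReal.ofReal (3 / (2 * Real.pi * r ^ 3)) *
          ∫⁻ w in ball z r, (‖h w‖₊ : ℝ≥0∞) := henn
      _ ≤ ENNReal.ofReal (3 / (2 * Real.pi * r ^ 3)) *
          (ENNReal.ofReal (‖z‖) ^ 3 * ∫⁻ w, F (z, w)) := mul_le_mul_right hker _
      _ = (ENNReal.ofReal (3 / (2 * Real.pi * r ^ 3)) * ENNReal.ofReal (‖z‖) ^ 3) *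
          ∫⁻ w, F (z, w) := by rw [← mul_assoc]
      _ = C₁ * ∫⁻ w, F (z, w) := by
          congr 1
          rw [← ENNReal.ofReal_pow (norm_nonneg z),
            ← ENNReal.ofReal_mul (by positivity), hC₁]
          congr 1
          rw [hr]
          have hne1 : Real.pi ≠ 0 := hπ.ne'
          have hne2 : c ≠ 0 := hc0.ne'
          have hne3 : ‖z‖ ≠ 0 := hzpos.ne'
          field_simp
  -- the kernel bound for fixed w
  have P3 : ∀ w : ℂ, (∫⁻ z, F (z, w)) ≤ C₂ * (g w * (ENNReal.ofReal (‖w‖))⁻¹) := by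
    intro w
    by_cases hwS : w ∈ S
    · have hw0 : w ≠ 0 := hwS.1
      have htpos : 0 < ‖w‖ := norm_pos_iff.mpr hw0
      have h1c : 0 < 1 - c := by linarith
      set t : ℝ := ‖w‖ with ht
      set ρ : ℝ := c / (1 - c) * t with hρ
      have hta0 : ENNReal.ofReal t ≠ 0 := by
        simp only [ne_eq, ENNReal.ofReal_eq_zero, not_le]; linarith
      have htane : ENNReal.ofReal t ≠ ⊤ := ENNReal.ofReal_ne_top
      have hbd : ∀ z, F (z, w) ≤ (ball w ρ).indicator
          (fun _ => ENNReal.ofReal ((1 + c) / t) ^ 3 * g w) z := by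
        intro z
        rw [hF]
        by_cases hzK : (z, w) ∈ K
        · rw [indicator_of_mem hzK]
          have hd1 : dist w z < c * ‖z‖ := hzK
          have hup : ‖z‖ ≤ t + dist w z := by
            rw [dist_eq]
            have h5 := norm_add_le w (z - w)
            rw [norm_sub_rev z w] at *
            simpa [ht] using h5
          have hlow : t ≤ ‖z‖ + dist w z := by
            rw [dist_eq]
            have h6 := norm_add_le z (w - z)
            simpa [ht] using h6
          have hzup : ‖z‖ ≤ t / (1 - c) := by
            rw [le_div_iff₀ h1c]
            nlinarith
          have hzlow : t / (1 + c) ≤ ‖z‖ := by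
            rw [div_le_iff₀ (by linarith)]
            nlinarith
          have hzball : z ∈ ball w ρ := by
            rw [mem_ball]
            rw [dist_comm]
            calc dist w z < c * ‖z‖ := hd1
              _ ≤ c * (t / (1 - c)) := mul_le_mul_of_nonneg_left hzup hc0.le
              _ = ρ := by rw [hρ]; ring
          rw [indicator_of_mem hzball]
          apply mul_le_mul_left
          apply pow_le_pow_left' ?_ 3
          calc (ENNReal.ofReal (‖z‖))⁻¹
              ≤ (ENNReal.ofReal (t / (1 + c)))⁻¹ :=
                ENNReal.inv_le_inv' (ENNReal.ofReal_le_ofReal hzlow)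
            _ = ENNReal.ofReal ((1 + c) / t) := by
                rw [← ENNReal.ofReal_inv_of_pos (by positivity), inv_div]
        · rw [indicator_of_notMem hzK]
          exact zero_le
      calc (∫⁻ z, F (z, w))
          ≤ ∫⁻ z, (ball w ρ).indicator
            (fun _ => ENNReal.ofReal ((1 + c) / t) ^ 3 * g w) z := lintegral_mono hbd
        _ = (ENNReal.ofReal ((1 + c) / t) ^ 3 * g w) * volume (ball w ρ) :=
            lintegral_indicator_const measurableSet_ball _
        _ = (ENNReal.ofReal ((1 + c) / t) ^ 3 * g w) *
            (ENNReal.ofReal ρ ^ 2 * NNReal.pi) := by rw [Complex.volume_ball]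
        _ = C₂ * (g w * (ENNReal.ofReal t)⁻¹) := by
            rw [ENNReal.ofReal_div_of_pos htpos, ENNReal.div_eq_inv_mul, hρ,
              ENNReal.ofReal_mul (by positivity)]
            have hcancel : (ENNReal.ofReal t)⁻¹ ^ 3 * ENNReal.ofReal t ^ 2 =
                (ENNReal.ofReal t)⁻¹ := by
              have h1 : (ENNReal.ofReal t)⁻¹ * ENNReal.ofReal t = 1 :=
                ENNReal.inv_mul_cancel hta0 htane
              calc (ENNReal.ofReal t)⁻¹ ^ 3 * ENNReal.ofReal t ^ 2
                  = (ENNReal.ofReal t)⁻¹ * (((ENNReal.ofReal t)⁻¹ * ENNReal.ofReal t) *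
                    ((ENNReal.ofReal t)⁻¹ * ENNReal.ofReal t)) := by ring
                _ = (ENNReal.ofReal t)⁻¹ := by rw [h1]; simp
            calc ((ENNReal.ofReal t)⁻¹ * ENNReal.ofReal (1 + c)) ^ 3 * g w *
                ((ENNReal.ofReal (c / (1 - c)) * ENNReal.ofReal t) ^ 2 * NNReal.pi)
                = (ENNReal.ofReal (1 + c) ^ 3 * ENNReal.ofReal (c / (1 - c)) ^ 2 *
                  (NNReal.pi : ℝ≥0∞)) * (g w * ((ENNReal.ofReal t)⁻¹ ^ 3 *
                  ENNReal.ofReal t ^ 2)) := by ring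
              _ = C₂ * (g w * (ENNReal.ofReal t)⁻¹) := by rw [hcancel, hC₂]
    · have hzero : ∀ z, F (z, w) = 0 := by
        intro z
        rw [hF, Set.indicator_apply]
        split
        · simp only [hg, indicator_of_notMem hwS, mul_zero]
        · rfl
      simp only [hzero, lintegral_zero]
      exact zero_le
  -- finiteness of the sector integral of |h|/|z|
  have hfin : (∫⁻ w, g w * (ENNReal.ofReal (‖w‖))⁻¹) < ⊤ := by
    have heq : ∀ w, g w * (ENNReal.ofReal (‖w‖))⁻¹ =
        S.indicator (fun w => ENNReal.ofReal (‖h w‖ / ‖w‖)) w := by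
      intro w
      by_cases hw : w ∈ S
      · rw [hg]
        rw [indicator_of_mem hw, indicator_of_mem hw]
        have htpos : 0 < ‖w‖ := norm_pos_iff.mpr hw.1
        rw [ENNReal.ofReal_div_of_pos htpos, div_eq_mul_inv]
        congr 1
        rw [ofReal_norm, enorm_eq_nnnorm]
      · rw [hg, indicator_of_notMem hw, indicator_of_notMem hw, zero_mul]
    calc (∫⁻ w, g w * (ENNReal.ofReal (‖w‖))⁻¹)
        = ∫⁻ w, S.indicator (fun w => ENNReal.ofReal (‖h w‖ / ‖w‖)) w :=
          lintegral_congr heq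
      _ = ∫⁻ w in S, ENNReal.ofReal (‖h w‖ / ‖w‖) :=
          lintegral_indicator hSopen.measurableSet _
      _ = ∫⁻ w in S, (‖‖h w‖ / ‖w‖‖₊ : ℝ≥0∞) :=
          lintegral_congr fun w => by
            rw [← enorm_eq_nnnorm, Real.enorm_eq_ofReal (by positivity)]
      _ < ⊤ := hint.2
  -- assemble
  constructor
  · exact (continuous_norm.comp_continuousOn
      (((hd.analyticOnNhd hSopen).deriv.continuousOn).mono hS'S)).aestronglyMeasurable
      hS'open.measurableSet
  · show (∫⁻ z in S', (‖‖deriv h z‖‖₊ : ℝ≥0∞)) < ⊤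
    have hnneq : ∀ z : ℂ, (‖‖deriv h z‖‖₊ : ℝ≥0∞) = (‖deriv h z‖₊ : ℝ≥0∞) := by
      intro z
      rw [← enorm_eq_nnnorm, Real.enorm_eq_ofReal (norm_nonneg _),
        ofReal_norm, enorm_eq_nnnorm]
    calc (∫⁻ z in S', (‖‖deriv h z‖‖₊ : ℝ≥0∞))
        = ∫⁻ z in S', (‖deriv h z‖₊ : ℝ≥0∞) := lintegral_congr fun z => hnneq z
      _ ≤ ∫⁻ z in S', C₁ * ∫⁻ w, F (z, w) := setLIntegral_mono' hS'open.measurableSet P1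
      _ = C₁ * ∫⁻ z in S', ∫⁻ w, F (z, w) := lintegral_const_mul' _ _ ENNReal.ofReal_ne_top
      _ ≤ C₁ * ∫⁻ z, ∫⁻ w, F (z, w) := mul_le_mul_right (setLIntegral_le_lintegral _ _) _
      _ = C₁ * ∫⁻ w, ∫⁻ z, F (z, w) := by
          congr 1
          exact lintegral_lintegral_swap
            ((hFmeas.comp (measurable_fst.prodMk measurable_snd)).aemeasurable)
      _ ≤ C₁ * ∫⁻ w, C₂ * (g w * (ENNReal.ofReal (‖w‖))⁻¹) :=
          mul_le_mul_right (lintegral_mono P3) _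
      _ = C₁ * (C₂ * ∫⁻ w, g w * (ENNReal.ofReal (‖w‖))⁻¹) := by
          rw [lintegral_const_mul' _ _ hC₂ne]
      _ < ⊤ := ENNReal.mul_lt_top (ENNReal.ofReal_lt_top)
          (ENNReal.mul_lt_top hC₂ne.lt_top hfin)
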